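/- Consider the Hilbert space ℂ^L with matrices indexed by sites x ∈ {0,…,L−1}, where site x is of sublattice type A if x is even and type B if x is odd, and let C' be the diagonal matrix with entries (−1)^x. Let H be a Hermitian L×L matrix with HC' + C'H = 0, let δ > 0, S = tanh(H/δ), and let θ : {0,…,L−1} → ℝ with associated diagonal matrix θ(X). Then Tr(C'·θ(X)·(1−S²)) = ½·Tr(C'·S·[θ(X),S]) + ∑_{x=0}^{L−1} (−1)^x·θ(x); in particular, when θ takes values in {0,1}, the edge index equals the bulk index plus n_{A,θ} − n_{B,θ}, the difference between the number of A sites and of B sites in the region where θ = 1. -/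

import Mathlib

open MeasureTheory
open scoped ComplexOrder

noncomputable section

namespace Chiral

/-- The ℓ²-operator norm of a square complex matrix. -/
def opNorm {n : Type*} [Fintype n] [DecidableEq n] (T : Matrix n n ℂ) : ℝ :=
  ‖Matrix.toEuclideanCLM (𝕜 := ℂ) T‖

/-- The trace norm `Tr √(T*T)` of a square complex matrix. -/
def traceNorm {n : Type*} [Fintype n] [DecidableEq n] (T : Matrix n n ℂ) : ℝ :=
  (((Matrix.posSemidef_conjTranspose_mul_self T).1.eigenvectorUnitary : Matrix n n ℂ) *
      Matrix.diagonal (fun i => ((Real.sqrt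
        ((Matrix.posSemidef_conjTranspose_mul_self T).1.eigenvalues i) : ℝ) : ℂ)) *
      (star (Matrix.posSemidef_conjTranspose_mul_self T).1.eigenvectorUnitary :
        Matrix n n ℂ)).trace.re

open Classical in
/-- Functional calculus of a Hermitian matrix: same eigenvectors, eigenvalue `E`
replaced by `f E`.  (Junk value `0` if the matrix is not Hermitian.) -/
def matFun {n : Type*} [Fintype n] [DecidableEq n] (f : ℝ → ℂ) (H : Matrix n n ℂ) :
    Matrix n n ℂ :=
  if hH : H.IsHermitian then
    (hH.eigenvectorUnitary : Matrix n n ℂ) *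
      Matrix.diagonal (fun i => f (hH.eigenvalues i)) *
      star (hH.eigenvectorUnitary : Matrix n n ℂ)
  else 0

/-- The matrix exponential. -/
def matExp {n : Type*} [Fintype n] [DecidableEq n] (M : Matrix n n ℂ) : Matrix n n ℂ :=
  NormedSpace.exp M

/-- `S = tanh (H/δ)` by functional calculus. -/
def tanhOf {n : Type*} [Fintype n] [DecidableEq n] (δ : ℝ) (H : Matrix n n ℂ) :
    Matrix n n ℂ :=
  matFun (fun E => (Real.tanh (E / δ) : ℂ)) H

/-- Index set of the finite chain of length `L` with two internal degrees of freedom. -/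
abbrev Site (L : ℕ) := Fin L × Fin 2

/-- The `2×2` block of a matrix on the chain corresponding to sites `x, y`. -/
def matBlock {L : ℕ} (T : Matrix (Site L) (Site L) ℂ) (x y : Fin L) :
    Matrix (Fin 2) (Fin 2) ℂ :=
  Matrix.of fun s s' => T (x, s) (y, s')

/-- A finite Hamiltonian is short range with parameters `d`, `K`. -/
def FinShortRange {L : ℕ} (H : Matrix (Site L) (Site L) ℂ) (d K : ℝ) : Prop :=
  ∀ x : Fin L, ∑ y : Fin L,
    opNorm (matBlock H x y) * Real.exp (|((x : ℕ) : ℝ) - ((y : ℕ) : ℝ)| / d) ≤ K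

/-- The chiral operator `C` on the finite chain: `+1` on the `A` component,
`-1` on the `B` component. -/
def chiralC (L : ℕ) : Matrix (Site L) (Site L) ℂ :=
  Matrix.diagonal fun p => if p.2 = 0 then 1 else -1

/-- The diagonal matrix `θ(X)` associated to a switch function `θ`. -/
def switchX {L : ℕ} (θ : Fin L → ℝ) : Matrix (Site L) (Site L) ℂ :=
  Matrix.diagonal fun p => (θ p.1 : ℂ)

/-- The standard switch function: `1` on the left half (`x < L/2`), `0` on the right half. -/
def midSwitch (L : ℕ) : Fin L → ℝ := fun x => if ((x : ℕ) : ℝ) < (L : ℝ) / 2 then 1 else 0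

/-- The edge index `Tr (C θ(X) (1 - S²))`. -/
def edgeIndex {L : ℕ} (θ : Fin L → ℝ) (S : Matrix (Site L) (Site L) ℂ) : ℂ :=
  Matrix.trace (chiralC L * switchX θ * (1 - S * S))

/-- The bulk index `½ Tr (C S [θ(X), S])`. -/
def bulkIndex {L : ℕ} (θ : Fin L → ℝ) (S : Matrix (Site L) (Site L) ℂ) : ℂ :=
  (1 / 2 : ℂ) * Matrix.trace (chiralC L * S * (switchX θ * S - S * switchX θ))

/-- The bulk Hilbert space `ℓ²(ℤ; ℂ²)`. -/
abbrev BulkSpace := lp (fun _ : ℤ => EuclideanSpace ℂ (Fin 2)) 2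

/-- Bounded operators on the bulk Hilbert space. -/
abbrev BulkOp := BulkSpace →L[ℂ] BulkSpace

/-- The canonical basis vector at site `x` with internal index `s`. -/
def bvec (x : ℤ) (s : Fin 2) : BulkSpace := lp.single 2 x (EuclideanSpace.single s 1)

/-- The `2×2` block `T_{x,y}` of a bulk operator. -/
def bulkBlock (T : BulkOp) (x y : ℤ) : Matrix (Fin 2) (Fin 2) ℂ :=
  Matrix.of fun s s' => (inner ℂ (bvec x s) (T (bvec y s')) : ℂ)

/-- A bulk Hamiltonian is short range with parameters `d`, `K`:
`sup_x ∑_y ‖T_{x,y}‖ e^{|x-y|/d} ≤ K`. -/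
def BulkShortRange (T : BulkOp) (d K : ℝ) : Prop :=
  ∀ x : ℤ,
    Summable (fun y : ℤ => opNorm (bulkBlock T x y) * Real.exp (|((x : ℝ)) - ((y : ℝ))| / d)) ∧
    ∑' y : ℤ, opNorm (bulkBlock T x y) * Real.exp (|((x : ℝ)) - ((y : ℝ))| / d) ≤ K

/-- The spectrum of `T` does not meet the open interval `(-Δ, Δ)`. -/
def HasGap (T : BulkOp) (Δ : ℝ) : Prop :=
  ∀ r : ℝ, |r| < Δ → (r : ℂ) ∉ spectrum ℂ T

/-- The on-site chiral matrix `diag(1, -1)`. -/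
def c2 : Matrix (Fin 2) (Fin 2) ℂ := Matrix.diagonal fun s => if s = 0 then 1 else -1

/-- A bulk operator is chiral: it anticommutes with the bulk chiral operator
(expressed blockwise, which is equivalent). -/
def ChiralBulk (T : BulkOp) : Prop :=
  ∀ x y : ℤ, c2 * bulkBlock T x y + bulkBlock T x y * c2 = 0

/-- The restriction `ι* T ι` of a bulk operator to the finite open chain of length `L`. -/
def restrict (L : ℕ) (T : BulkOp) : Matrix (Site L) (Site L) ℂ :=
  Matrix.of fun p q => bulkBlock T ((p.1 : ℕ) : ℤ) ((q.1 : ℕ) : ℤ) p.2 q.2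

section Aux

variable {L : ℕ}

/-- Conjugation by a self-adjoint involution `C` (with `C * C = 1`, `star C = C`) as a
star algebra homomorphism on matrices. -/
def conjHom {n : Type*} [Fintype n] [DecidableEq n] (C : Matrix n n ℂ)
    (hC2 : C * C = 1) (hCs : star C = C) : Matrix n n ℂ →⋆ₐ[ℂ] Matrix n n ℂ where
  toFun M := C * M * C
  map_one' := by show C * 1 * C = 1; rw [mul_one, hC2]
  map_mul' M N := by
    show C * (M * N) * C = (C * M * C) * (C * N * C)
    have h : (C * M * C) * (C * N * C) = C * M * (C * C) * (N * C) := by noncomm_ring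
    rw [h, hC2]; noncomm_ring
  map_zero' := by show C * 0 * C = 0; simp
  map_add' M N := by
    show C * (M + N) * C = C * M * C + C * N * C
    noncomm_ring
  commutes' r := by
    show C * algebraMap ℂ (Matrix n n ℂ) r * C = algebraMap ℂ (Matrix n n ℂ) r
    simp only [Algebra.algebraMap_eq_smul_one]
    rw [mul_smul_comm, mul_one, smul_mul_assoc, hC2]
  map_star' M := by
    show C * star M * C = star (C * M * C)
    simp only [star_mul, hCs, star_star]
    rw [mul_assoc]

lemma tanhOf_eq_cfc {n : Type*} [Fintype n] [DecidableEq n] (δ : ℝ)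
    (H : Matrix n n ℂ) (hH : H.IsHermitian) :
    tanhOf δ H = cfc (fun E : ℝ => Real.tanh (E / δ)) H := by
  rw [hH.cfc_eq]
  rw [tanhOf, matFun, dif_pos hH, Matrix.IsHermitian.cfc]
  rfl

lemma anticomm_tanhOf {n : Type*} [Fintype n] [DecidableEq n]
    (C H : Matrix n n ℂ) (hC2 : C * C = 1) (hCs : star C = C)
    (hH : H.IsHermitian) (hchiral : H * C + C * H = 0) (δ : ℝ) :
    C * tanhOf δ H * C = - tanhOf δ H := by
  have hCHC : C * H * C = -H := by
    have h1 : C * H = -(H * C) := eq_neg_of_add_eq_zero_right hchiral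
    rw [h1]
    have : -(H * C) * C = -(H * (C * C)) := by noncomm_ring
    rw [this, hC2, mul_one]
  have hHsa : IsSelfAdjoint H := hH
  have hφcont : Continuous fun M : Matrix n n ℂ => C * M * C :=
    (continuous_const.matrix_mul continuous_id).matrix_mul continuous_const
  have hφa : IsSelfAdjoint (C * H * C) := by
    rw [hCHC]; exact hHsa.neg
  have htanh : Continuous Real.tanh := by
    have h : Real.tanh = fun x => Real.sinh x / Real.cosh x := funext Real.tanh_eq_sinh_div_cosh
    rw [h]
    exact Real.continuous_sinh.div Real.continuous_cosh fun x => (Real.cosh_pos x).ne'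
  have hg : Continuous (fun E : ℝ => Real.tanh (E / δ)) :=
    htanh.comp (continuous_id.div_const δ)
  rw [tanhOf_eq_cfc δ H hH]
  have key := StarAlgHomClass.map_cfc (S := ℂ) (conjHom C hC2 hCs)
    (fun E : ℝ => Real.tanh (E / δ)) H hg.continuousOn hφcont hHsa hφa
  have hconj : conjHom C hC2 hCs H = C * H * C := rfl
  have key2 : C * cfc (fun E : ℝ => Real.tanh (E / δ)) H * C
      = cfc (fun E : ℝ => Real.tanh (E / δ)) (-H) := by
    rw [show C * cfc (fun E : ℝ => Real.tanh (E / δ)) H * C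
        = conjHom C hC2 hCs (cfc (fun E : ℝ => Real.tanh (E / δ)) H) from rfl, key,
      hconj, hCHC]
  rw [key2, ← cfc_comp_neg (f := fun E : ℝ => Real.tanh (E / δ)) (a := H)
    hg.continuousOn hHsa]
  have hodd : (fun x : ℝ => Real.tanh (-x / δ)) = fun x : ℝ => -Real.tanh (x / δ) := by
    funext x
    rw [neg_div, Real.tanh_neg]
  calc cfc (fun x : ℝ => Real.tanh (-x / δ)) H
      = cfc (fun x : ℝ => -Real.tanh (x / δ)) H := by rw [hodd]
    _ = -cfc (fun E : ℝ => Real.tanh (E / δ)) H := cfc_neg _ _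

end Aux

theorem stmt3 (L : ℕ) (H : Matrix (Fin L) (Fin L) ℂ) (hH : H.IsHermitian)
    (hchiral : H * Matrix.diagonal (fun x : Fin L => (-1 : ℂ) ^ (x : ℕ)) +
        Matrix.diagonal (fun x : Fin L => (-1 : ℂ) ^ (x : ℕ)) * H = 0)
    (δ : ℝ) (hδ : 0 < δ) (θ : Fin L → ℝ) :
    Matrix.trace (Matrix.diagonal (fun x : Fin L => (-1 : ℂ) ^ (x : ℕ)) *
        Matrix.diagonal (fun x : Fin L => (θ x : ℂ)) *
        (1 - tanhOf δ H * tanhOf δ H)) =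
      (1 / 2 : ℂ) * Matrix.trace (Matrix.diagonal (fun x : Fin L => (-1 : ℂ) ^ (x : ℕ)) *
          tanhOf δ H *
          (Matrix.diagonal (fun x : Fin L => (θ x : ℂ)) * tanhOf δ H -
            tanhOf δ H * Matrix.diagonal (fun x : Fin L => (θ x : ℂ)))) +
        ∑ x : Fin L, (-1 : ℂ) ^ (x : ℕ) * (θ x : ℂ) := by
  set C : Matrix (Fin L) (Fin L) ℂ := Matrix.diagonal (fun x : Fin L => (-1 : ℂ) ^ (x : ℕ))
    with hCdef
  set Θ : Matrix (Fin L) (Fin L) ℂ := Matrix.diagonal (fun x : Fin L => (θ x : ℂ)) with hΘdef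
  set S : Matrix (Fin L) (Fin L) ℂ := tanhOf δ H with hSdef
  have hC2 : C * C = 1 := by
    rw [hCdef, Matrix.diagonal_mul_diagonal]
    have h : (fun x : Fin L => (-1 : ℂ) ^ (x : ℕ) * (-1) ^ (x : ℕ)) = fun _ => (1 : ℂ) := by
      funext x
      rw [← pow_add, ← two_mul, pow_mul]
      simp
    rw [h, Matrix.diagonal_one]
  have hCs : star C = C := by
    rw [hCdef, Matrix.star_eq_conjTranspose, Matrix.diagonal_conjTranspose]
    have h : (star fun x : Fin L => (-1 : ℂ) ^ (x : ℕ)) = fun x : Fin L => (-1 : ℂ) ^ (x : ℕ) := by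
      funext x
      simp [Pi.star_apply, star_pow]
    rw [h]
  have hanti : C * S = -(S * C) := by
    have h := anticomm_tanhOf C H hC2 hCs hH hchiral δ
    have h2 : C * S * C * C = -S * C := by rw [h]
    have h3 : C * S * (C * C) = -S * C := by rw [← h2]; noncomm_ring
    rw [hC2, mul_one] at h3
    rw [h3]; noncomm_ring
  -- trace identities
  have t1 : Matrix.trace (C * S * (Θ * S)) = -Matrix.trace (C * Θ * (S * S)) := by
    have e : C * S * (Θ * S) = -(S * (C * Θ * S)) := by rw [hanti]; noncomm_ring
    rw [e, Matrix.trace_neg, Matrix.trace_mul_comm S (C * Θ * S)]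
    congr 2
    noncomm_ring
  have t2 : Matrix.trace (C * S * (S * Θ)) = Matrix.trace (C * Θ * (S * S)) := by
    have hCS2 : C * (S * S) = S * S * C := by
      have h1 : C * (S * S) = (C * S) * S := by noncomm_ring
      rw [h1, hanti]
      have h2 : -(S * C) * S = -(S * (C * S)) := by noncomm_ring
      rw [h2, hanti]
      noncomm_ring
    have e : C * S * (S * Θ) = (S * S) * (C * Θ) := by
      have h1 : C * S * (S * Θ) = (C * (S * S)) * Θ := by noncomm_ring
      rw [h1, hCS2]
      noncomm_ring
    rw [e, Matrix.trace_mul_comm (S * S) (C * Θ)]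
  have t3 : Matrix.trace (C * Θ) = ∑ x : Fin L, (-1 : ℂ) ^ (x : ℕ) * (θ x : ℂ) := by
    rw [hCdef, hΘdef, Matrix.diagonal_mul_diagonal, Matrix.trace_diagonal]
  have lhs_eq : Matrix.trace (C * Θ * (1 - S * S))
      = Matrix.trace (C * Θ) - Matrix.trace (C * Θ * (S * S)) := by
    rw [mul_sub, mul_one, Matrix.trace_sub]
  have rhs_eq : Matrix.trace (C * S * (Θ * S - S * Θ))
      = Matrix.trace (C * S * (Θ * S)) - Matrix.trace (C * S * (S * Θ)) := by
    rw [mul_sub, Matrix.trace_sub]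
  rw [lhs_eq, rhs_eq, t1, t2, ← t3]
  ring

end Chiral

end
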